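/- Let E = ((N_t, q_t))_{t∈[m]} ∈ E_{n,m,q} be a nested request sequence (N_1 ⊇ ⋯ ⊇ N_m) whose offline nodes are labeled so that their latest arriving online neighbors μ_i = max(Γ_i(E) ∪ {0}) satisfy μ_1 ≤ μ_2 ≤ ⋯ ≤ μ_n. Define z ∈ ℝ^n_{≥0} by z(i) = Σ_{t ∈ Γ_i(E) \ Γ_{i−1}(E)} q_t, where Γ_0(E) = ∅. Then the water-filling allocation satisfies WF(E) = Hz, where H ∈ ℝ^{n×n} is the matrix H(i,j) = 1{i ≥ j}/(n − j + 1). -/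

import Mathlib

open Finset MeasureTheory

/-- A request sequence with `n` offline nodes and `m` online nodes: each online
node `t` has a nonempty neighborhood `N t ⊆ [n]` and a positive quantity `q t`. -/
structure ReqSeq (n m : ℕ) where
  N : Fin m → Finset (Fin n)
  q : Fin m → ℝ
  N_nonempty : ∀ t, (N t).Nonempty
  q_pos : ∀ t, 0 < q t

/-- `Δ(N, q)`: feasible allocations for a single online node. -/
def allocSet (n : ℕ) (N : Finset (Fin n)) (qt : ℝ) : Set (Fin n → ℝ) :=
  {x | (∀ i, 0 ≤ x i) ∧ (∀ i, i ∉ N → x i = 0) ∧ ∑ i, x i = qt}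

/-- A feasible allocation trajectory on a request sequence. -/
def Feasible {n m : ℕ} (E : ReqSeq n m) (x : Fin m → Fin n → ℝ) : Prop :=
  ∀ t, x t ∈ allocSet n (E.N t) (E.q t)

/-- `Δ(E)`: the Minkowski sum of the per-node allocation sets (feasible load vectors). -/
def loads {n m : ℕ} (E : ReqSeq n m) : Set (Fin n → ℝ) :=
  {ℓ | ∃ x, Feasible E x ∧ ℓ = ∑ t, x t}

/-- Sum of the `k` largest entries of `x`. -/
noncomputable def topSum {n : ℕ} (x : Fin n → ℝ) (k : ℕ) : ℝ :=
  sSup ((fun s : Finset (Fin n) => ∑ i ∈ s, x i) '' {s | s.card = k})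

/-- `Majorizes x y` means `x ⪰ y`: equal total sums and every `k`-largest-entries
sum of `x` dominates that of `y`. -/
def Majorizes {n : ℕ} (x y : Fin n → ℝ) : Prop :=
  (∑ i, x i = ∑ i, y i) ∧ ∀ k ≤ n, topSum y k ≤ topSum x k

/-- `f` is Schur-concave on the nonnegative orthant: `x ⪯ y → f x ≥ f y`. -/
def SchurConcave {n : ℕ} (f : (Fin n → ℝ) → ℝ) : Prop :=
  ∀ x y : Fin n → ℝ, (∀ i, 0 ≤ x i) → (∀ i, 0 ≤ y i) → Majorizes y x → f y ≤ f x

/-- `g` is Schur-convex on the nonnegative orthant: `x ⪯ y → g x ≤ g y`. -/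
def SchurConvex {n : ℕ} (g : (Fin n → ℝ) → ℝ) : Prop :=
  ∀ x y : Fin n → ℝ, (∀ i, 0 ≤ x i) → (∀ i, 0 ≤ y i) → Majorizes y x → g x ≤ g y

/-- Cumulative load strictly before online node `t`. -/
def prevLoad {n m : ℕ} (x : Fin m → Fin n → ℝ) (t : Fin m) : Fin n → ℝ :=
  fun i => ∑ s ∈ Finset.univ.filter (fun s => s < t), x s i

/-- Minimum of `v` over the neighborhood of online node `t`. -/
noncomputable def minOnNbr {n m : ℕ} (E : ReqSeq n m) (t : Fin m) (v : Fin n → ℝ) : ℝ :=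
  (E.N t).inf' (E.N_nonempty t) v

/-- `x` is the water-filling allocation trajectory on `E`: at each arrival `t`,
`x t` maximizes the minimum post-allocation load over `N t`. -/
def IsWFAlloc {n m : ℕ} (E : ReqSeq n m) (x : Fin m → Fin n → ℝ) : Prop :=
  Feasible E x ∧
  ∀ t, ∀ y ∈ allocSet n (E.N t) (E.q t),
    minOnNbr E t (fun i => y i + prevLoad x t i) ≤ minOnNbr E t (fun i => x t i + prevLoad x t i)

-- The load vector produced by water-filling (via choice; the trajectory exists and is unique).
open Classical in
noncomputable def wfLoad {n m : ℕ} (E : ReqSeq n m) : Fin n → ℝ :=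
  if h : ∃ x, IsWFAlloc E x then ∑ t, h.choose t else 0

/-- `ℓ` is the majorization-minimal element of `Δ(E)`. -/
def IsOpt {n m : ℕ} (E : ReqSeq n m) (ℓ : Fin n → ℝ) : Prop :=
  ℓ ∈ loads E ∧ ∀ ℓ' ∈ loads E, Majorizes ℓ' ℓ

-- `OPT(E)`, the majorization-minimal feasible load vector (via choice).
open Classical in
noncomputable def optLoad {n m : ℕ} (E : ReqSeq n m) : Fin n → ℝ :=
  if h : ∃ ℓ, IsOpt E ℓ then h.choose else 0

/-- A request sequence is nested if `N 1 ⊇ N 2 ⊇ ⋯ ⊇ N m`. -/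
def IsNested {n m : ℕ} (E : ReqSeq n m) : Prop :=
  ∀ s t : Fin m, s ≤ t → E.N t ⊆ E.N s

/-- `E_{n,m,q}`: request sequences with total quantity `q`. -/
def seqs (n m : ℕ) (q : ℝ) : Set (ReqSeq n m) := {E | ∑ t, E.q t = q}

/-- The harmonic-series matrix applied to a vector: `(Hℓ)(i) = Σ_{j ≤ i} ℓ(j)/(n − j + 1)`
(in 1-indexed notation). -/
noncomputable def Hvec (n : ℕ) (ℓ : Fin n → ℝ) : Fin n → ℝ :=
  fun i => ∑ j ∈ Finset.univ.filter (fun j => j ≤ i), ℓ j / ((n - (j : ℕ) : ℕ) : ℝ)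

/-- The water-filling height of online node `t`: the common post-allocation load of
the offline nodes in the support of `x t`. -/
noncomputable def height {n m : ℕ} (x : Fin m → Fin n → ℝ) (t : Fin m) : ℝ :=
  sSup {c | ∃ i, 0 < x t i ∧ c = x t i + prevLoad x t i}


/-- `μ_i = max(Γ_i(E) ∪ {0})`: the (1-indexed) latest arriving online neighbor of
offline node `i` (0 if `i` has no neighbor). -/
def lastNbr {n m : ℕ} (E : ReqSeq n m) (i : Fin n) : ℕ :=
  (Finset.univ.filter (fun t => i ∈ E.N t)).sup (fun t => (t : ℕ) + 1)

/-- `z(i) = Σ_{t ∈ Γ_i(E) \ Γ_{i−1}(E)} q_t`, with `Γ_0(E) = ∅` (here the predecessor of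
offline node `i` is the node `j` with `j + 1 = i`, if any). -/
noncomputable def zvec {n m : ℕ} (E : ReqSeq n m) : Fin n → ℝ :=
  fun i => ∑ t, if i ∈ E.N t ∧ ¬ ∃ j : Fin n, (j : ℕ) + 1 = (i : ℕ) ∧ j ∈ E.N t
    then E.q t else 0

section WFAux

variable {n m : ℕ}

lemma lastNbr_mem_iff (E : ReqSeq n m) (hnest : IsNested E) (t : Fin m) (i : Fin n) :
    i ∈ E.N t ↔ (t : ℕ) < lastNbr E i := by
  constructor
  · intro h
    have : (t : ℕ) + 1 ≤ lastNbr E i :=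
      Finset.le_sup (f := fun s : Fin m => (s : ℕ) + 1) (by simp [h])
    omega
  · intro h
    obtain ⟨s, hs, hts⟩ := Finset.lt_sup_iff.mp h
    simp only [Finset.mem_filter, Finset.mem_univ, true_and] at hs
    exact hnest t s (Fin.le_def.mpr (by omega)) hs

/-- The water-filling allocation on a nested sequence is the uniform split. -/
lemma wf_uniform (E : ReqSeq n m) (hnest : IsNested E)
    (x : Fin m → Fin n → ℝ) (hx : IsWFAlloc E x) (t : Fin m) :
    x t = fun i => if i ∈ E.N t then E.q t / (E.N t).card else 0 := by
  classical
  set c : Fin m → Fin n → ℝ :=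
    fun t i => if i ∈ E.N t then E.q t / (E.N t).card else 0 with hc
  have hcard : ∀ t : Fin m, ((E.N t).card : ℝ) ≠ 0 := by
    intro t
    exact_mod_cast Finset.card_ne_zero_of_mem (E.N_nonempty t).choose_spec
  have hcalloc : ∀ t, c t ∈ allocSet n (E.N t) (E.q t) := by
    intro t
    refine ⟨fun i => ?_, fun i hi => by simp [hc, hi], ?_⟩
    · by_cases hi : i ∈ E.N t
      · simp only [hc, hi, if_true]
        exact div_nonneg (E.q_pos t).le (by positivity)
      · simp [hc, hi]
    · simp only [hc]
      rw [Finset.sum_ite_mem, Finset.univ_inter, Finset.sum_const, nsmul_eq_mul,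
        mul_div_cancel₀ _ (hcard t)]
  suffices H : ∀ k : ℕ, ∀ t : Fin m, (t : ℕ) = k → x t = c t from H t.val t rfl
  intro k
  induction k using Nat.strong_induction_on with
  | _ k ih =>
    intro t ht
    have ihs : ∀ s : Fin m, s < t → x s = c s := by
      intro s hs
      exact ih s.val (by rw [Fin.lt_def] at hs; omega) s rfl
    obtain ⟨hx0, hxout, hxsum⟩ := hx.1 t
    set C : ℝ := ∑ s ∈ Finset.univ.filter (fun s => s < t), E.q s / (E.N s).card with hCdef
    have hC : ∀ i ∈ E.N t, prevLoad x t i = C := by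
      intro i hi
      unfold prevLoad
      refine Finset.sum_congr rfl ?_
      intro s hs
      have hst : s < t := (Finset.mem_filter.mp hs).2
      rw [ihs s hst]
      have : i ∈ E.N s := hnest s t hst.le hi
      simp [hc, this]
    have hsumN : ∑ i ∈ E.N t, x t i = E.q t := by
      rw [← hxsum]
      exact Finset.sum_subset (Finset.subset_univ _)
        (fun i _ hi => hxout i hi)
    have hwf := hx.2 t (c t) (hcalloc t)
    have h1 : minOnNbr E t (fun i => c t i + prevLoad x t i) = E.q t / (E.N t).card + C := by
      unfold minOnNbr
      rw [Finset.inf'_congr (E.N_nonempty t) rfl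
        (g := fun _ => E.q t / (E.N t).card + C)
        (fun i hi => by rw [hC i hi]; simp [hc, hi])]
      exact Finset.inf'_const _ _
    rw [h1] at hwf
    have h2 : ∀ i ∈ E.N t, E.q t / (E.N t).card ≤ x t i := by
      intro i hi
      have hle : minOnNbr E t (fun i => x t i + prevLoad x t i) ≤ x t i + prevLoad x t i :=
        Finset.inf'_le _ hi
      rw [hC i hi] at hle
      linarith
    have hzero : ∑ i ∈ E.N t, (x t i - E.q t / (E.N t).card) = 0 := by
      rw [Finset.sum_sub_distrib, hsumN, Finset.sum_const, nsmul_eq_mul,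
        mul_div_cancel₀ _ (hcard t), sub_self]
    have h3 : ∀ i ∈ E.N t, x t i = E.q t / (E.N t).card := by
      intro i hi
      have := (Finset.sum_eq_zero_iff_of_nonneg
        (fun i hi => sub_nonneg.mpr (h2 i hi))).mp hzero i hi
      linarith
    funext i
    by_cases hi : i ∈ E.N t
    · simp [hc, hi, h3 i hi]
    · simp [hc, hi, hxout i hi]

end WFAux

/-- **Observation (Water-filling Transform H).** For a nested sequence `E` whose offline
nodes are labeled so that `μ_1 ≤ ⋯ ≤ μ_n`, the water-filling allocation satisfies
`WF(E) = Hz`. -/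
theorem wf_transform_H (n m : ℕ) (E : ReqSeq n m) (hnest : IsNested E)
    (hsorted : Monotone (lastNbr E))
    (x : Fin m → Fin n → ℝ) (hx : IsWFAlloc E x) :
    ∑ t, x t = Hvec n (zvec E) := by
  classical
  have hmem : ∀ (t : Fin m) (i : Fin n), i ∈ E.N t ↔ (t : ℕ) < lastNbr E i :=
    fun t i => lastNbr_mem_iff E hnest t i
  have hkey := wf_uniform E hnest x hx
  funext i
  rw [Finset.sum_apply]
  have hL : ∑ t, x t i = ∑ t, (if i ∈ E.N t then E.q t / (E.N t).card else 0) :=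
    Finset.sum_congr rfl fun t _ => by rw [hkey t]
  rw [hL]
  simp only [Hvec, zvec, Finset.sum_div]
  rw [Finset.sum_comm]
  refine Finset.sum_congr rfl fun t _ => ?_
  have hsplit : ∀ j : Fin n,
      (if j ∈ E.N t ∧ ¬ ∃ j' : Fin n, (j' : ℕ) + 1 = (j : ℕ) ∧ j' ∈ E.N t
        then E.q t else 0) / ((n - (j : ℕ) : ℕ) : ℝ)
      = (if j ∈ E.N t ∧ ¬ ∃ j' : Fin n, (j' : ℕ) + 1 = (j : ℕ) ∧ j' ∈ E.N t
        then E.q t / ((n - (j : ℕ) : ℕ) : ℝ) else 0) := by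
    intro j; split <;> simp
  simp only [hsplit]
  by_cases hi : i ∈ E.N t
  · -- exactly one j ≤ i contributes, namely the least j with t < μ j
    set S : Finset (Fin n) := Finset.univ.filter (fun j => (t : ℕ) < lastNbr E j) with hS
    have hiS : i ∈ S := by simp [hS, (hmem t i).mp hi]
    set j0 := S.min' ⟨i, hiS⟩ with hj0def
    have hj0S : j0 ∈ S := Finset.min'_mem _ _
    have hj0 : (t : ℕ) < lastNbr E j0 := by
      simpa [hS] using hj0S
    have hmin : ∀ j : Fin n, (t : ℕ) < lastNbr E j → j0 ≤ j := fun j hj =>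
      Finset.min'_le S j (by simp [hS, hj])
    have hj0i : j0 ≤ i := hmin i ((hmem t i).mp hi)
    have hNt : E.N t = Finset.Ici j0 := by
      ext k
      rw [hmem, Finset.mem_Ici]
      exact ⟨hmin k, fun hk => lt_of_lt_of_le hj0 (hsorted hk)⟩
    have hcardNt : (E.N t).card = n - (j0 : ℕ) := by
      rw [hNt, Fin.card_Ici]
    have hPj0 : j0 ∈ E.N t ∧ ¬ ∃ j' : Fin n, (j' : ℕ) + 1 = (j0 : ℕ) ∧ j' ∈ E.N t := by
      refine ⟨(hmem t j0).mpr hj0, ?_⟩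
      rintro ⟨j', hj'1, hj'2⟩
      have h1 := (hmem t j').mp hj'2
      have h2 := hmin j' h1
      rw [Fin.le_def] at h2
      omega
    have hothers : ∀ b ∈ Finset.univ.filter (fun j : Fin n => j ≤ i), b ≠ j0 →
        (if b ∈ E.N t ∧ ¬ ∃ j' : Fin n, (j' : ℕ) + 1 = (b : ℕ) ∧ j' ∈ E.N t
          then E.q t / ((n - (b : ℕ) : ℕ) : ℝ) else 0) = 0 := by
      intro b hb hbne
      rw [if_neg]
      rintro ⟨hb1, hb2⟩
      have hbμ := (hmem t b).mp hb1
      have hj0b := hmin b hbμ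
      have hlt : (j0 : ℕ) < (b : ℕ) := by
        rw [Fin.le_def] at hj0b
        have : (j0 : ℕ) ≠ (b : ℕ) := fun h => hbne (Fin.ext h.symm)
        omega
      refine hb2 ⟨⟨(b : ℕ) - 1, by omega⟩, by simp; omega, ?_⟩
      refine (hmem t _).mpr (lt_of_lt_of_le hj0 (hsorted ?_))
      rw [Fin.le_def]
      simp
      omega
    rw [Finset.sum_eq_single_of_mem j0 (by simp [hj0i]) hothers]
    rw [if_pos hPj0, if_pos hi, hcardNt]
  · rw [if_neg hi]
    symm
    apply Finset.sum_eq_zero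
    intro j hj
    rw [if_neg]
    rintro ⟨hj1, -⟩
    have h1 := (hmem t j).mp hj1
    have hji : j ≤ i := (Finset.mem_filter.mp hj).2
    have h2 := hsorted hji
    exact hi ((hmem t i).mpr (by omega))
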